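/- (Consistency of BBSE, Proposition 1, part 2) Assume the label shift assumption (A.1), p(y) > 0 for all y (A.2), and that the confusion matrix C is invertible (A.3). Then as n, m → ∞, the estimator μ̂_y = diag(ν̂_y) ŵ converges almost surely to the target label marginal μ_y ∈ ℝ^k, where (μ_y)_j = q(j). -/

import Mathlib

open MeasureTheory ProbabilityTheory Filter Matrix Topology

noncomputable section

/-- Population confusion matrix: `C i j = P (f⁻¹(i) × {j})`. -/
def confusion {X : Type*} [MeasurableSpace X] {k : ℕ}
    (P : Measure (X × Fin k)) (f : X → Fin k) : Matrix (Fin k) (Fin k) ℝ :=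
  fun i j => (P ((f ⁻¹' {i}) ×ˢ ({j} : Set (Fin k)))).toReal

/-- Empirical confusion matrix from `n` samples. -/
def empConfusion {X Ω : Type*} {k : ℕ}
    (f : X → Fin k) (Z : ℕ → Ω → X × Fin k) (n : ℕ) (ω : Ω) : Matrix (Fin k) (Fin k) ℝ :=
  fun i j => ((Finset.range n).filter (fun l => f (Z l ω).1 = i ∧ (Z l ω).2 = j)).card / n

/-- Empirical prediction frequencies on the target sample. -/
def empMu {X Ω : Type*} {k : ℕ} (f : X → Fin k) (Z' : ℕ → Ω → X) (m : ℕ) (ω : Ω) :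
    Fin k → ℝ :=
  fun i => ((Finset.range m).filter (fun l => f (Z' l ω) = i)).card / m

/-- Empirical label frequencies on the source sample. -/
def empNu {X Ω : Type*} {k : ℕ} (Z : ℕ → Ω → X × Fin k) (n : ℕ) (ω : Ω) : Fin k → ℝ :=
  fun j => ((Finset.range n).filter (fun l => (Z l ω).2 = j)).card / n

/-- The combined family of source samples (indexed by `Sum.inl`) and target samples
(indexed by `Sum.inr`), used to state mutual independence. -/
def pairFam {X Ω : Type*} {k : ℕ} (Z : ℕ → Ω → X × Fin k) (Z' : ℕ → Ω → X) :
    (s : ℕ ⊕ ℕ) → Ω → Sum.elim (fun _ : ℕ => X × Fin k) (fun _ : ℕ => X) s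
  | .inl i => Z i
  | .inr j => Z' j

/-- The measurable-space structures on the codomains of `pairFam`. -/
def pairMS {X : Type*} [MeasurableSpace X] {k : ℕ} :
    (s : ℕ ⊕ ℕ) → MeasurableSpace (Sum.elim (fun _ : ℕ => X × Fin k) (fun _ : ℕ => X) s)
  | .inl _ => (inferInstance : MeasurableSpace (X × Fin k))
  | .inr _ => (inferInstance : MeasurableSpace X)

/-- SLLN for frequencies of an event along an iid sequence. -/
lemma slln_freq {α Ω : Type*} [MeasurableSpace α] [MeasurableSpace Ω]
    (μ : Measure Ω) [IsProbabilityMeasure μ] (ν : Measure α)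
    (Z : ℕ → Ω → α) (hZm : ∀ l, Measurable (Z l)) (hlaw : ∀ l, μ.map (Z l) = ν)
    (hind : Pairwise fun i j => IndepFun (Z i) (Z j) μ)
    (p : α → Prop) [DecidablePred p] (hp : MeasurableSet {a | p a}) :
    ∀ᵐ ω ∂μ, Tendsto
      (fun n => ((((Finset.range n).filter (fun l => p (Z l ω))).card : ℝ) / n))
      atTop (𝓝 (ν {a | p a}).toReal) := by
  set g : α → ℝ := fun a => if p a then 1 else 0 with hg
  have hgm : Measurable g := Measurable.ite hp measurable_const measurable_const
  set Y : ℕ → Ω → ℝ := fun l ω => g (Z l ω) with hY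
  have hY0 : Y 0 = Set.indicator ((Z 0) ⁻¹' {a | p a}) (fun _ => (1:ℝ)) := by
    funext ω
    simp [Y, g, Set.indicator_apply, Set.mem_preimage, Set.mem_setOf_eq]
  have hint : Integrable (Y 0) μ := by
    rw [hY0]
    exact (integrable_const (1:ℝ)).indicator ((hZm 0) hp)
  have hindep : Pairwise (Function.onFun (IndepFun · · μ) Y) := fun i j hij =>
    (hind hij).comp hgm hgm
  have hident : ∀ i, IdentDistrib (Y i) (Y 0) μ μ := fun i =>
    (IdentDistrib.comp ⟨(hZm i).aemeasurable, (hZm 0).aemeasurable,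
      by rw [hlaw i, hlaw 0]⟩ hgm)
  have hmean : μ[Y 0] = (ν {a | p a}).toReal := by
    rw [hY0, integral_indicator_const (1:ℝ) ((hZm 0) hp), smul_eq_mul, mul_one,
      ← hlaw 0, Measure.map_apply (hZm 0) hp, measureReal_def]
  have := strong_law_ae_real Y hint hindep hident
  rw [hmean] at this
  filter_upwards [this] with ω hω
  convert hω using 2 with n
  rw [← Finset.sum_boole]

/-- Population confusion matrix identity `C *ᵥ w = μ_ŷ`. -/
lemma confusion_mulVec_eq {X : Type*} [MeasurableSpace X] {k : ℕ}
    (P Q : Measure (X × Fin k)) [IsProbabilityMeasure P] [IsProbabilityMeasure Q]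
    (f : X → Fin k) (hf : Measurable f)
    (A1 : ∀ (y : Fin k) (A : Set X), MeasurableSet A →
      P (A ×ˢ ({y} : Set (Fin k))) * Q (Set.univ ×ˢ ({y} : Set (Fin k)))
        = Q (A ×ˢ ({y} : Set (Fin k))) * P (Set.univ ×ˢ ({y} : Set (Fin k))))
    (A2 : ∀ y : Fin k, 0 < (P (Set.univ ×ˢ ({y} : Set (Fin k)))).toReal) :
    confusion P f *ᵥ (fun j => (Q (Set.univ ×ˢ ({j} : Set (Fin k)))).toReal
        / (P (Set.univ ×ˢ ({j} : Set (Fin k)))).toReal)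
      = fun i => ((Q.map Prod.fst) (f ⁻¹' {i})).toReal := by
  funext i
  have hterm : ∀ j, confusion P f i j * ((Q (Set.univ ×ˢ ({j} : Set (Fin k)))).toReal
      / (P (Set.univ ×ˢ ({j} : Set (Fin k)))).toReal)
      = (Q ((f ⁻¹' {i}) ×ˢ ({j} : Set (Fin k)))).toReal := by
    intro j
    have h1 := A1 j (f ⁻¹' {i}) (hf (measurableSet_singleton i))
    have h2 : (P ((f ⁻¹' {i}) ×ˢ ({j} : Set (Fin k)))).toReal
        * (Q (Set.univ ×ˢ ({j} : Set (Fin k)))).toReal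
        = (Q ((f ⁻¹' {i}) ×ˢ ({j} : Set (Fin k)))).toReal
        * (P (Set.univ ×ˢ ({j} : Set (Fin k)))).toReal := by
      rw [← ENNReal.toReal_mul, ← ENNReal.toReal_mul, h1]
    have hp : (P (Set.univ ×ˢ ({j} : Set (Fin k)))).toReal ≠ 0 := (A2 j).ne'
    show (P ((f ⁻¹' {i}) ×ˢ ({j} : Set (Fin k)))).toReal * _ = _
    rw [← mul_div_assoc, h2, mul_div_assoc, div_self hp, mul_one]
  have hsum : Q ((f ⁻¹' {i}) ×ˢ (Set.univ : Set (Fin k)))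
      = ∑ j, Q ((f ⁻¹' {i}) ×ˢ ({j} : Set (Fin k))) := by
    have hU : (f ⁻¹' {i}) ×ˢ (Set.univ : Set (Fin k))
        = ⋃ j, (f ⁻¹' {i}) ×ˢ ({j} : Set (Fin k)) := by
      rw [← Set.iUnion_of_singleton (Fin k), Set.prod_iUnion]
    rw [hU, measure_iUnion ?_ ?_, tsum_fintype]
    · intro a b hab
      rw [Function.onFun, Set.disjoint_left]
      rintro z ⟨-, hz1⟩ ⟨-, hz2⟩
      simp only [Set.mem_singleton_iff] at hz1 hz2
      exact hab (hz1 ▸ hz2 ▸ rfl)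
    · exact fun j => (hf (measurableSet_singleton i)).prod (measurableSet_singleton j)
  have hmap : (Q.map Prod.fst) (f ⁻¹' {i}) = Q ((f ⁻¹' {i}) ×ˢ (Set.univ : Set (Fin k))) := by
    rw [Measure.map_apply measurable_fst (hf (measurableSet_singleton i))]
    congr 1
    ext z; simp [Set.mem_prod]
  rw [Matrix.mulVec, dotProduct]
  simp only [hterm]
  rw [hmap, hsum, ENNReal.toReal_sum (fun j _ => measure_ne_top Q _)]

/-- Consistency of BBSE, part 2. Under the same assumptions, the estimator
`μ̂_y = diag(ν̂_y) ŵ` converges almost surely to the target label marginal `μ_y` as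
`n, m → ∞`. -/
theorem bbse_label_marginal_consistent
    {X : Type*} [MeasurableSpace X] {k : ℕ} (hk : 1 ≤ k)
    (P Q : Measure (X × Fin k)) [IsProbabilityMeasure P] [IsProbabilityMeasure Q]
    (f : X → Fin k) (hf : Measurable f)
    (A1 : ∀ (y : Fin k) (A : Set X), MeasurableSet A →
      P (A ×ˢ ({y} : Set (Fin k))) * Q (Set.univ ×ˢ ({y} : Set (Fin k)))
        = Q (A ×ˢ ({y} : Set (Fin k))) * P (Set.univ ×ˢ ({y} : Set (Fin k))))
    (A2 : ∀ y : Fin k, 0 < (P (Set.univ ×ˢ ({y} : Set (Fin k)))).toReal)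
    (A3 : IsUnit (confusion P f).det)
    {Ω : Type*} [MeasurableSpace Ω] (μ : Measure Ω) [IsProbabilityMeasure μ]
    (Z : ℕ → Ω → X × Fin k) (Z' : ℕ → Ω → X)
    (hZmeas : ∀ l, Measurable (Z l)) (hZ'meas : ∀ l, Measurable (Z' l))
    (hZlaw : ∀ l, μ.map (Z l) = P) (hZ'law : ∀ l, μ.map (Z' l) = Q.map Prod.fst)
    (hindep : iIndepFun (m := pairMS (X := X) (k := k)) (pairFam Z Z') μ)
    (West : ℕ → ℕ → Ω → Fin k → ℝ)
    (hWest : ∀ (n m : ℕ) (ω : Ω), IsUnit (empConfusion f Z n ω).det →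
      West n m ω = (empConfusion f Z n ω)⁻¹ *ᵥ empMu f Z' m ω) :
    ∀ᵐ ω ∂μ, Tendsto (fun nm : ℕ × ℕ => fun j => empNu Z nm.1 ω j * West nm.1 nm.2 ω j)
      atTop (nhds (fun j => (Q (Set.univ ×ˢ ({j} : Set (Fin k)))).toReal)) := by
  classical
  haveI : IsProbabilityMeasure (Q.map (Prod.fst : X × Fin k → X)) :=
    Measure.isProbabilityMeasure_map measurable_fst.aemeasurable
  set C := confusion P f with hCdef
  have hdet0 : C.det ≠ 0 := isUnit_iff_ne_zero.mp A3
  have hindZ : Pairwise fun i j => IndepFun (Z i) (Z j) μ := fun i j hij =>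
    hindep.indepFun (show (Sum.inl i : ℕ ⊕ ℕ) ≠ Sum.inl j by simpa using hij)
  have hindZ' : Pairwise fun i j => IndepFun (Z' i) (Z' j) μ := fun i j hij =>
    hindep.indepFun (show (Sum.inr i : ℕ ⊕ ℕ) ≠ Sum.inr j by simpa using hij)
  -- a.s. entrywise convergence of the empirical confusion matrix
  have hCae : ∀ᵐ ω ∂μ, ∀ i j : Fin k,
      Tendsto (fun n => empConfusion f Z n ω i j) atTop (𝓝 (C i j)) := by
    rw [ae_all_iff]; intro i; rw [ae_all_iff]; intro j
    have hp : MeasurableSet {z : X × Fin k | f z.1 = i ∧ z.2 = j} := by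
      have : {z : X × Fin k | f z.1 = i ∧ z.2 = j}
          = (f ⁻¹' {i}) ×ˢ ({j} : Set (Fin k)) := by
        ext z; simp only [Set.mem_setOf_eq, Set.mem_prod, Set.mem_preimage,
          Set.mem_singleton_iff, Set.mem_univ, true_and]
      rw [this]
      exact (hf (measurableSet_singleton i)).prod (measurableSet_singleton j)
    have h := slln_freq μ P Z hZmeas hZlaw hindZ (fun z => f z.1 = i ∧ z.2 = j) hp
    have hset : {z : X × Fin k | f z.1 = i ∧ z.2 = j}
        = (f ⁻¹' {i}) ×ˢ ({j} : Set (Fin k)) := by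
      ext z; simp only [Set.mem_setOf_eq, Set.mem_prod, Set.mem_preimage,
          Set.mem_singleton_iff, Set.mem_univ, true_and]
    rw [hset] at h
    filter_upwards [h] with ω hω
    exact hω
  -- a.s. convergence of the empirical prediction frequencies
  have hμae : ∀ᵐ ω ∂μ, ∀ i : Fin k, Tendsto (fun m => empMu f Z' m ω i) atTop
      (𝓝 (((Q.map Prod.fst) (f ⁻¹' {i})).toReal)) := by
    rw [ae_all_iff]; intro i
    have h := slln_freq μ (Q.map Prod.fst) Z' hZ'meas hZ'law hindZ' (fun x => f x = i)
      (hf (measurableSet_singleton i))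
    filter_upwards [h] with ω hω
    exact hω
  -- a.s. convergence of the empirical label frequencies
  have hνae : ∀ᵐ ω ∂μ, ∀ j : Fin k, Tendsto (fun n => empNu Z n ω j) atTop
      (𝓝 ((P (Set.univ ×ˢ ({j} : Set (Fin k)))).toReal)) := by
    rw [ae_all_iff]; intro j
    have hp : MeasurableSet {z : X × Fin k | z.2 = j} :=
      measurable_snd (measurableSet_singleton j)
    have h := slln_freq μ P Z hZmeas hZlaw hindZ (fun z => z.2 = j) hp
    have hset : {z : X × Fin k | z.2 = j} = Set.univ ×ˢ ({j} : Set (Fin k)) := by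
      ext z; simp only [Set.mem_setOf_eq, Set.mem_prod, Set.mem_preimage,
          Set.mem_singleton_iff, Set.mem_univ, true_and]
    rw [hset] at h
    filter_upwards [h] with ω hω
    exact hω
  -- population solution
  set w : Fin k → ℝ := fun j => (Q (Set.univ ×ˢ ({j} : Set (Fin k)))).toReal
      / (P (Set.univ ×ˢ ({j} : Set (Fin k)))).toReal with hwdef
  have hw : C⁻¹ *ᵥ (fun i => ((Q.map Prod.fst) (f ⁻¹' {i})).toReal) = w := by
    rw [← confusion_mulVec_eq P Q f hf A1 A2, Matrix.mulVec_mulVec,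
      Matrix.nonsing_inv_mul _ A3, Matrix.one_mulVec]
  have htarget : (fun j => (Q (Set.univ ×ˢ ({j} : Set (Fin k)))).toReal)
      = fun j => (P (Set.univ ×ˢ ({j} : Set (Fin k)))).toReal * w j := by
    funext j
    rw [hwdef, ← mul_div_assoc, mul_div_cancel_left₀ _ (A2 j).ne']
  filter_upwards [hCae, hμae, hνae] with ω hCω hμω hνω
  have hCmat : Tendsto (fun n => empConfusion f Z n ω) atTop (𝓝 C) := by
    apply tendsto_pi_nhds.2; intro i
    apply tendsto_pi_nhds.2; intro j
    exact hCω i j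
  have hinv : Tendsto (fun n => (empConfusion f Z n ω)⁻¹) atTop (𝓝 C⁻¹) := by
    have hcont : ContinuousAt Inv.inv C :=
      continuousAt_matrix_inv C (by rw [Ring.inverse_eq_inv']; exact continuousAt_inv₀ hdet0)
    exact hcont.tendsto.comp hCmat
  have hdettend : Tendsto (fun n => (empConfusion f Z n ω).det) atTop (𝓝 C.det) :=
    (continuous_id.matrix_det.tendsto C).comp hCmat
  have hev : ∀ᶠ n in atTop, (empConfusion f Z n ω).det ≠ 0 :=
    hdettend.eventually_ne hdet0
  rw [← prod_atTop_atTop_eq, htarget]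
  have hF : Tendsto (fun nm : ℕ × ℕ => fun j => empNu Z nm.1 ω j *
      ((empConfusion f Z nm.1 ω)⁻¹ *ᵥ empMu f Z' nm.2 ω) j) (atTop ×ˢ atTop)
      (𝓝 (fun j => (P (Set.univ ×ˢ ({j} : Set (Fin k)))).toReal * w j)) := by
    apply tendsto_pi_nhds.2
    intro j
    have h1 : Tendsto (fun nm : ℕ × ℕ => empNu Z nm.1 ω j) (atTop ×ˢ atTop)
        (𝓝 (P (Set.univ ×ˢ ({j} : Set (Fin k)))).toReal) := (hνω j).comp tendsto_fst
    have h2 : Tendsto (fun nm : ℕ × ℕ =>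
        ((empConfusion f Z nm.1 ω)⁻¹ *ᵥ empMu f Z' nm.2 ω) j)
        (atTop ×ˢ atTop)
        (𝓝 ((C⁻¹ *ᵥ fun i => ((Q.map Prod.fst) (f ⁻¹' {i})).toReal) j)) := by
      simp only [Matrix.mulVec, dotProduct]
      apply tendsto_finset_sum
      intro i _
      exact ((tendsto_pi_nhds.1 (tendsto_pi_nhds.1 hinv j) i).comp tendsto_fst).mul
        ((hμω i).comp tendsto_snd)
    rw [hw] at h2
    exact h1.mul h2
  refine hF.congr' ?_
  filter_upwards [hev.prod_inl atTop] with nm hnm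
  funext j
  rw [hWest nm.1 nm.2 ω (isUnit_iff_ne_zero.2 hnm)]

end
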